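/- Let X, Y be Banach spaces, f : X → Y a C¹ local diffeomorphism with X complete, and x₀ ∈ X. Set η(ρ) = inf{‖df(x)⁻¹‖⁻¹ : ‖x − x₀‖ ≤ ρ} and ϱ(r) = ∫₀ʳ η(ρ) dρ. If ϱ(r) > 0 for some r > 0, then the open ball B(f(x₀), ϱ(r)) is contained in f(B(x₀, r)). -/

import Mathlib

open Set Metric Filter MeasureTheory
open scoped NNReal Topology

private lemma eta_int {η : ℝ → ℝ} (hmono : AntitoneOn η (Set.Ici 0)) {a b : ℝ}
    (ha : 0 ≤ a) (hb : 0 ≤ b) : IntervalIntegrable η MeasureTheory.volume a b := by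
  apply AntitoneOn.intervalIntegrable
  apply hmono.mono
  intro x hx
  exact le_trans (le_min ha hb) hx.1

private lemma phi_mono {η : ℝ → ℝ} (hmono : AntitoneOn η (Set.Ici 0))
    (hnn : ∀ ρ, 0 ≤ ρ → 0 ≤ η ρ) {a b : ℝ} (ha : 0 ≤ a) (hab : a ≤ b) :
    (∫ s in (0:ℝ)..a, η s) ≤ ∫ s in (0:ℝ)..b, η s := by
  have hb := ha.trans hab
  rw [← intervalIntegral.integral_add_adjacent_intervals (eta_int hmono le_rfl ha)
    (eta_int hmono ha hb)]
  have h0 : 0 ≤ ∫ s in a..b, η s :=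
    intervalIntegral.integral_nonneg hab (fun u hu => hnn u (ha.trans hu.1))
  linarith

private lemma phi_step {η : ℝ → ℝ} (hmono : AntitoneOn η (Set.Ici 0))
    {a b : ℝ} (ha : 0 ≤ a) (hab : a ≤ b) :
    (∫ s in (0:ℝ)..b, η s) ≤ (∫ s in (0:ℝ)..a, η s) + (b - a) * η a := by
  have hb := ha.trans hab
  rw [← intervalIntegral.integral_add_adjacent_intervals (eta_int hmono le_rfl ha)
    (eta_int hmono ha hb)]
  have h1 : (∫ s in a..b, η s) ≤ ∫ s in a..b, (fun _ => η a) s := by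
    apply intervalIntegral.integral_mono_on hab (eta_int hmono ha hb) intervalIntegrable_const
    intro u hu
    exact hmono (Set.mem_Ici.2 ha) (Set.mem_Ici.2 (ha.trans hu.1)) hu.1
  rw [intervalIntegral.integral_const] at h1
  simp only [smul_eq_mul] at h1
  linarith

set_option maxHeartbeats 1600000 in
/-- Quantitative Hadamard-type estimate: if `ϱ(r) = ∫₀ʳ inf{‖df(x)⁻¹‖⁻¹ : ‖x−x₀‖ ≤ ρ} dρ`
is positive then `B(f(x₀), ϱ(r)) ⊆ f(B(x₀, r))`. -/
theorem stmt14 {X Y : Type*} [NormedAddCommGroup X] [NormedSpace ℝ X] [CompleteSpace X]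
    [NormedAddCommGroup Y] [NormedSpace ℝ Y] [CompleteSpace Y]
    (f : X → Y) (hf : ContDiff ℝ 1 f)
    (f' : X → X ≃L[ℝ] Y) (hf' : ∀ x, HasFDerivAt f (f' x : X →L[ℝ] Y) x)
    (x₀ : X) {r : ℝ} (hr : 0 < r)
    (η : ℝ → ℝ)
    (hη : ∀ ρ : ℝ, η ρ =
      sInf {c : ℝ | ∃ x : X, ‖x - x₀‖ ≤ ρ ∧ c = ‖((f' x).symm : Y →L[ℝ] X)‖⁻¹})
    (hϱ : 0 < ∫ ρ in (0:ℝ)..r, η ρ) :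
    Metric.ball (f x₀) (∫ ρ in (0:ℝ)..r, η ρ) ⊆ f '' Metric.ball x₀ r := by
  classical
  -- basic properties of η
  have hbdd : ∀ ρ : ℝ, BddBelow {c : ℝ | ∃ x : X, ‖x - x₀‖ ≤ ρ ∧
      c = ‖((f' x).symm : Y →L[ℝ] X)‖⁻¹} := by
    intro ρ
    refine ⟨0, ?_⟩
    rintro c ⟨x, -, rfl⟩
    positivity
  have hne : ∀ ρ : ℝ, 0 ≤ ρ → ({c : ℝ | ∃ x : X, ‖x - x₀‖ ≤ ρ ∧
      c = ‖((f' x).symm : Y →L[ℝ] X)‖⁻¹}).Nonempty := by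
    intro ρ hρ
    exact ⟨_, x₀, by simpa using hρ, rfl⟩
  have η_nonneg : ∀ ρ, 0 ≤ ρ → 0 ≤ η ρ := by
    intro ρ hρ
    rw [hη]
    refine le_csInf (hne ρ hρ) ?_
    rintro c ⟨x, -, rfl⟩
    positivity
  have η_le : ∀ (x : X) (ρ : ℝ), ‖x - x₀‖ ≤ ρ →
      η ρ ≤ ‖((f' x).symm : Y →L[ℝ] X)‖⁻¹ := by
    intro x ρ h
    rw [hη]
    exact csInf_le (hbdd ρ) ⟨x, h, rfl⟩
  have η_anti : AntitoneOn η (Set.Ici 0) := by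
    intro a ha b _ hab
    rw [hη, hη]
    refine csInf_le_csInf (hbdd b) (hne a ha) ?_
    rintro c ⟨x, hx, rfl⟩
    exact ⟨x, hx.trans hab, rfl⟩
  set φ : ℝ → ℝ := fun ρ => ∫ s in (0:ℝ)..ρ, η s with hφdef
  set I : ℝ := ∫ ρ in (0:ℝ)..r, η ρ with hIdef
  have hIr : I = φ r := rfl
  have hφ0 : φ 0 = 0 := intervalIntegral.integral_same
  -- continuity of φ on [0, r]
  have hφcont : ContinuousOn φ (Set.Icc 0 r) := by
    have h1 : ContinuousOn φ (Set.uIcc 0 r) :=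
      intervalIntegral.continuousOn_primitive_interval' (eta_int η_anti le_rfl hr.le)
        Set.left_mem_uIcc
    rwa [Set.uIcc_of_le hr.le] at h1
  -- the trivial case of a subsingleton domain
  rcases subsingleton_or_nontrivial X with hX | hX
  · have hYs : Subsingleton Y := (f' x₀).toEquiv.symm.subsingleton
    intro y _
    exact ⟨x₀, mem_ball_self hr, Subsingleton.elim _ _⟩
  intro y hy
  set K : ℝ := ‖y - f x₀‖ with hKdef
  have hK : K < I := by rwa [Metric.mem_ball, dist_eq_norm] at hy
  rcases eq_or_lt_of_le (norm_nonneg (y - f x₀)) with hK0 | hKpos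
  · have hy0 : y = f x₀ := by rw [← sub_eq_zero]; exact norm_eq_zero.mp hK0.symm
    exact ⟨x₀, mem_ball_self hr, hy0.symm⟩
  -- constants
  set K₁ : ℝ := (K + I) / 2 with hK₁def
  set K₂ : ℝ := (K₁ + I) / 2 with hK₂def
  have hKK₁ : K < K₁ := by simp only [hK₁def]; linarith
  have hK₁pos : 0 < K₁ := lt_trans hKpos hKK₁
  have hK₁K₂ : K₁ < K₂ := by simp only [hK₂def]; linarith
  have hK₂I : K₂ < I := by simp only [hK₂def]; linarith
  -- the radius ρ̄ where φ = K₂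
  obtain ⟨ρb, hρbmem, hρbval⟩ : ∃ ρb ∈ Set.Icc (0:ℝ) r, φ ρb = K₂ := by
    have h1 : K₂ ∈ Set.Icc (φ 0) (φ r) := by
      rw [hφ0, ← hIr]
      constructor <;> [positivity; linarith]
    obtain ⟨ρb, h2, h3⟩ := intermediate_value_Icc hr.le hφcont h1
    exact ⟨ρb, h2, h3⟩
  obtain ⟨hρb0, hρbr⟩ := hρbmem
  set m : ℝ := η ρb with hmdef
  have hm_pos : 0 < m := by
    by_contra h
    push_neg at h
    have h1 : φ r ≤ φ ρb + (r - ρb) * m := phi_step η_anti hρb0 hρbr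
    have h2 : (r - ρb) * m ≤ 0 := mul_nonpos_of_nonneg_of_nonpos (by linarith) h
    rw [hρbval] at h1
    rw [← hIr] at h1
    linarith
  set C : ℝ := K₁ / m with hCdef
  have hC : 0 < C := div_pos hK₁pos hm_pos
  -- the segment
  set g : ℝ → Y := fun t => f x₀ + t • (y - f x₀) with hgdef
  have hgnorm : ∀ s t : ℝ, ‖g t - g s‖ = |t - s| * K := by
    intro s t
    have : g t - g s = (t - s) • (y - f x₀) := by
      simp only [hgdef]
      rw [sub_smul]
      abel
    rw [this, norm_smul, Real.norm_eq_abs]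
  have hg0 : g 0 = f x₀ := by simp [hgdef]
  have hg1 : g 1 = y := by simp [hgdef]
  -- the invariant
  set Good : ℝ → X → Prop := fun t x =>
    0 ≤ t ∧ t ≤ 1 ∧ f x = g t ∧ φ ‖x - x₀‖ ≤ t * K₁ with hGooddef
  have good_rad : ∀ t x, Good t x → ‖x - x₀‖ < ρb ∧ m ≤ η ‖x - x₀‖ := by
    intro t x ⟨ht0, ht1, _, hinv⟩
    have h1 : φ ‖x - x₀‖ ≤ K₁ := hinv.trans (by
      calc t * K₁ ≤ 1 * K₁ := mul_le_mul_of_nonneg_right ht1 hK₁pos.le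
        _ = K₁ := one_mul _)
    have h2 : ‖x - x₀‖ < ρb := by
      by_contra h
      push_neg at h
      have h3 : φ ρb ≤ φ ‖x - x₀‖ := phi_mono η_anti η_nonneg hρb0 h
      rw [hρbval] at h3
      linarith
    exact ⟨h2, by rw [hmdef]; exact η_anti (norm_nonneg _) (Set.mem_Ici.2 hρb0) h2.le⟩
  -- the key local extension step
  have hstep : ∀ t x, Good t x → t < 1 →
      ∃ t' x', t < t' ∧ Good t' x' ∧ ‖x' - x‖ ≤ (t' - t) * C := by
    intro t x hG ht1'
    obtain ⟨ht0, ht1, hfx, hinv⟩ := hG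
    obtain ⟨hρρb, hmρ⟩ := good_rad t x ⟨ht0, ht1, hfx, hinv⟩
    set ρ : ℝ := ‖x - x₀‖ with hρdef
    set N : ℝ := ‖((f' x).symm : Y →L[ℝ] X)‖ with hNdef
    have hNpos : 0 < N := by
      rw [hNdef, norm_pos_iff]
      intro h0
      obtain ⟨v, hv⟩ := exists_ne (0 : X)
      apply hv
      calc v = (f' x).symm ((f' x) v) := ((f' x).symm_apply_apply v).symm
        _ = ((f' x).symm : Y →L[ℝ] X) ((f' x) v) := rfl
        _ = 0 := by rw [h0]; rfl
    have hηN : η ρ ≤ N⁻¹ := η_le x ρ le_rfl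
    have hmN : m ≤ N⁻¹ := hmρ.trans hηN
    have hNinvpos : 0 < N⁻¹ := inv_pos.2 hNpos
    set creal : ℝ := N⁻¹ * (1 - K / K₁) with hcrealdef
    have hcpos : 0 < creal := by
      apply mul_pos hNinvpos
      rw [sub_pos]
      exact (div_lt_one hK₁pos).2 hKK₁
    set b : ℝ := N⁻¹ * (K / K₁) with hbdef
    have hbpos : 0 < b := mul_pos hNinvpos (div_pos hKpos hK₁pos)
    -- strict derivative and linear approximation
    have hsd : HasStrictFDerivAt f ((f' x : X →L[ℝ] Y)) x := by
      have h1 := (hf.contDiffAt : ContDiffAt ℝ 1 f x).hasStrictFDerivAt one_ne_zero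
      rwa [(hf' x).fderiv] at h1
    have hc'pos : 0 < creal.toNNReal := Real.toNNReal_pos.2 hcpos
    obtain ⟨s, hs, hAs⟩ := hsd.approximates_deriv_on_nhds (Or.inr hc'pos)
    obtain ⟨ε, hε, hballs⟩ := Metric.mem_nhds_iff.1 hs
    set ε₂ : ℝ := ε / 2 with hε₂def
    have hε₂pos : 0 < ε₂ := by positivity
    have hsub2 : closedBall x ε₂ ⊆ s :=
      (Metric.closedBall_subset_ball (by simp only [hε₂def]; linarith)).trans hballs
    set t' : ℝ := min 1 (t + b * ε₂ / K) with ht'def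
    have hKpos' : 0 < K := hKpos
    have hbε₂K : 0 < b * ε₂ / K := div_pos (mul_pos hbpos hε₂pos) hKpos'
    have htt' : t < t' := lt_min ht1' (by linarith)
    have ht'1 : t' ≤ 1 := min_le_left _ _
    set Δ : ℝ := t' - t with hΔdef
    have hΔpos : 0 < Δ := by simp only [hΔdef]; linarith
    set ε' : ℝ := Δ * K / b with hε'def
    have hε'pos : 0 < ε' := div_pos (mul_pos hΔpos hKpos') hbpos
    have hΔle : Δ ≤ b * ε₂ / K := by
      simp only [hΔdef]
      have := min_le_right 1 (t + b * ε₂ / K)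
      linarith [this.trans_eq' ht'def.symm]
    have hε'ε₂ : ε' ≤ ε₂ := by
      rw [hε'def, div_le_iff₀ hbpos]
      rw [le_div_iff₀ hKpos'] at hΔle
      linarith
    have hA2 : ApproximatesLinearOn f ((f' x : X →L[ℝ] Y)) (closedBall x ε') creal.toNNReal :=
      hAs.mono_set ((Metric.closedBall_subset_closedBall hε'ε₂).trans hsub2)
    have hsurj := hA2.surjOn_closedBall_of_nonlinearRightInverse
      (f' x).toNonlinearRightInverse hε'pos.le Set.Subset.rfl
    have hrad : (((((f' x).toNonlinearRightInverse.nnnorm : ℝ≥0) : ℝ))⁻¹ -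
        ((creal.toNNReal : ℝ≥0) : ℝ)) * ε' = b * ε' := by
      have h1 : (((f' x).toNonlinearRightInverse.nnnorm : ℝ≥0) : ℝ) = N := rfl
      have h2 : ((creal.toNNReal : ℝ≥0) : ℝ) = creal := Real.coe_toNNReal _ hcpos.le
      rw [h1, h2, hcrealdef, hbdef]
      ring
    rw [hrad] at hsurj
    have hbε' : b * ε' = Δ * K := by
      rw [hε'def]
      field_simp
    have hmem : g t' ∈ closedBall (f x) (b * ε') := by
      rw [Metric.mem_closedBall, dist_eq_norm, hfx, hgnorm t t',
        abs_of_nonneg (by linarith : (0:ℝ) ≤ t' - t), hbε']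
    obtain ⟨x', hx'mem, hfx'⟩ := hsurj hmem
    have hx'x : ‖x' - x‖ ≤ ε' := by
      rw [← dist_eq_norm]
      exact Metric.mem_closedBall.1 hx'mem
    have hKb : K / b ≤ C := by
      have h1 : K / b = K₁ * N := by
        rw [hbdef]
        field_simp
      rw [h1, hCdef, le_div_iff₀ hm_pos]
      have hmN1 : m * N ≤ 1 := by
        have h2 := mul_le_mul_of_nonneg_right hmN hNpos.le
        rwa [inv_mul_cancel₀ hNpos.ne'] at h2
      calc K₁ * N * m = K₁ * (m * N) := by ring
        _ ≤ K₁ * 1 := mul_le_mul_of_nonneg_left hmN1 hK₁pos.le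
        _ = K₁ := mul_one _
    refine ⟨t', x', htt', ⟨ht0.trans htt'.le, ht'1, hfx', ?_⟩, ?_⟩
    · -- invariant
      have h1 : ‖x' - x₀‖ ≤ ρ + ε' := by
        calc ‖x' - x₀‖ ≤ ‖x' - x‖ + ‖x - x₀‖ := norm_sub_le_norm_sub_add_norm_sub _ _ _
          _ ≤ ρ + ε' := by rw [hρdef]; linarith [hx'x]
      have h2 : φ ‖x' - x₀‖ ≤ φ (ρ + ε') :=
        phi_mono η_anti η_nonneg (norm_nonneg _) h1
      have h3 : φ (ρ + ε') ≤ φ ρ + (ρ + ε' - ρ) * η ρ :=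
        phi_step η_anti (norm_nonneg _) (by linarith)
      have h4 : ε' * η ρ ≤ ε' * N⁻¹ := mul_le_mul_of_nonneg_left hηN hε'pos.le
      have h5 : ε' * N⁻¹ = Δ * K₁ := by
        rw [hε'def, hbdef]
        field_simp
      have h6 : t * K₁ + Δ * K₁ = t' * K₁ := by rw [hΔdef]; ring
      calc φ ‖x' - x₀‖ ≤ φ ρ + (ρ + ε' - ρ) * η ρ := h2.trans h3
        _ ≤ t * K₁ + Δ * K₁ := by
            rw [show ρ + ε' - ρ = ε' from by ring]
            linarith [hinv, h4, h5.le, h5.ge]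
        _ = t' * K₁ := h6
    · -- norm bound
      calc ‖x' - x‖ ≤ ε' := hx'x
        _ = Δ * (K / b) := by rw [hε'def]; ring
        _ ≤ Δ * C := mul_le_mul_of_nonneg_left hKb hΔpos.le
        _ = (t' - t) * C := by rw [hΔdef]

  -- the chain construction
  -- one-step reachable times
  set S : ℝ → X → Set ℝ := fun t x =>
    {τ : ℝ | ∃ z, Good τ z ∧ ‖z - x‖ ≤ (τ - t) * C} with hSdef
  have hSmem : ∀ t x, Good t x → t ∈ S t x := by
    intro t x hG
    exact ⟨x, hG, by simp⟩
  have hSbdd : ∀ t x, BddAbove (S t x) :=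
    fun t x => ⟨1, by rintro τ ⟨z, hz, -⟩; exact hz.2.1⟩
  have hnext : ∀ (n : ℕ) (t : ℝ) (x : X), Good t x →
      ∃ t' x', Good t' x' ∧ ‖x' - x‖ ≤ (t' - t) * C ∧
        sSup (S t x) - (1/2 : ℝ)^n < t' := by
    intro n t x hG
    have h1 : sSup (S t x) - (1/2 : ℝ)^n < sSup (S t x) :=
      sub_lt_self _ (by positivity)
    obtain ⟨τ, hτS, hτ⟩ := exists_lt_of_lt_csSup ⟨t, hSmem t x hG⟩ h1
    obtain ⟨z, hz, hnorm⟩ := hτS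
    exact ⟨τ, z, hz, hnorm, hτ⟩
  have hGood0 : Good 0 x₀ := by
    refine ⟨le_rfl, zero_le_one, hg0.symm, ?_⟩
    rw [sub_self, norm_zero, hφ0]
    simp
  have hrec : ∀ (n : ℕ) (p : {q : ℝ × X // Good q.1 q.2}),
      ∃ q : {q : ℝ × X // Good q.1 q.2},
        ‖q.1.2 - p.1.2‖ ≤ (q.1.1 - p.1.1) * C ∧
        sSup (S p.1.1 p.1.2) - (1/2 : ℝ)^n < q.1.1 := by
    rintro n ⟨⟨t, x⟩, hG⟩
    obtain ⟨t', x', h1, h2, h3⟩ := hnext n t x hG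
    exact ⟨⟨(t', x'), h1⟩, h2, h3⟩
  choose F hF1 hF2 using hrec
  set u : ℕ → {q : ℝ × X // Good q.1 q.2} :=
    fun n => Nat.rec ⟨(0, x₀), hGood0⟩ (fun n p => F n p) n with hudef
  have hustep : ∀ n, u (n+1) = F n (u n) := fun n => rfl
  set T : ℕ → ℝ := fun n => (u n).1.1 with hTdef
  set Z : ℕ → X := fun n => (u n).1.2 with hZdef
  have hGoodn : ∀ n, Good (T n) (Z n) := fun n => (u n).2
  have hstep1 : ∀ n, ‖Z (n+1) - Z n‖ ≤ (T (n+1) - T n) * C := by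
    intro n
    have h := hF1 n (u n)
    rw [← hustep n] at h
    exact h
  have hsupb : ∀ n, sSup (S (T n) (Z n)) - (1/2 : ℝ)^n < T (n+1) := by
    intro n
    have h := hF2 n (u n)
    rw [← hustep n] at h
    exact h
  have hTmono : Monotone T := by
    apply monotone_nat_of_le_succ
    intro n
    have h1 := hstep1 n
    have h2 := norm_nonneg (Z (n+1) - Z n)
    by_contra h
    push_neg at h
    have h3 : (T (n+1) - T n) * C < 0 := mul_neg_of_neg_of_pos (by linarith) hC
    linarith
  have hT1 : ∀ n, T n ≤ 1 := fun n => (hGoodn n).2.1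
  have hT0 : ∀ n, 0 ≤ T n := fun n => (hGoodn n).1
  have hbddT : BddAbove (Set.range T) := ⟨1, by rintro _ ⟨n, rfl⟩; exact hT1 n⟩
  set tstar : ℝ := ⨆ n, T n with htstardef
  have hTconv : Tendsto T atTop (𝓝 tstar) := tendsto_atTop_ciSup hTmono hbddT
  have hTle : ∀ n, T n ≤ tstar := fun n => le_ciSup hbddT n
  have htstar1 : tstar ≤ 1 := ciSup_le hT1
  have htstar0 : 0 ≤ tstar := (hT0 0).trans (hTle 0)
  have hchain : ∀ p q : ℕ, p ≤ q → ‖Z q - Z p‖ ≤ (T q - T p) * C := by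
    intro p q hpq
    induction q, hpq using Nat.le_induction with
    | base => simp
    | succ n hn ih =>
      have h1 := hstep1 n
      have h2 := dist_triangle (Z (n+1)) (Z n) (Z p)
      rw [dist_eq_norm, dist_eq_norm, dist_eq_norm] at h2
      have h3 : (T (n+1) - T n) * C + (T n - T p) * C = (T (n+1) - T p) * C := by ring
      linarith
  have hZcauchy : CauchySeq Z := by
    rw [Metric.cauchySeq_iff']
    intro ε hε
    have h1 : tstar - ε / C < tstar := by
      have := div_pos hε hC
      linarith
    obtain ⟨N0, hN0⟩ := (hTconv.eventually (eventually_gt_nhds h1)).exists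
    refine ⟨N0, fun n hn => ?_⟩
    rw [dist_eq_norm]
    have h2 := hchain N0 n hn
    have h3 : (T n - T N0) * C ≤ (tstar - T N0) * C :=
      mul_le_mul_of_nonneg_right (by linarith [hTle n]) hC.le
    have h4 : (tstar - T N0) * C < (ε / C) * C :=
      mul_lt_mul_of_pos_right (by linarith) hC
    rw [div_mul_cancel₀ _ hC.ne'] at h4
    linarith
  obtain ⟨xstar, hxstar⟩ := cauchySeq_tendsto_of_complete hZcauchy
  have hxZn : ∀ n, ‖xstar - Z n‖ ≤ (tstar - T n) * C := by
    intro n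
    have h1 : Tendsto (fun q => ‖Z q - Z n‖) atTop (𝓝 ‖xstar - Z n‖) :=
      (hxstar.sub tendsto_const_nhds).norm
    apply le_of_tendsto h1
    filter_upwards [eventually_ge_atTop n] with q hq
    calc ‖Z q - Z n‖ ≤ (T q - T n) * C := hchain n q hq
      _ ≤ (tstar - T n) * C := mul_le_mul_of_nonneg_right (by linarith [hTle q]) hC.le
  have hgcont : Continuous g := by
    rw [hgdef]
    exact continuous_const.add (continuous_id.smul continuous_const)
  have hfxstar : f xstar = g tstar := by
    have h1 : Tendsto (fun n => f (Z n)) atTop (𝓝 (f xstar)) :=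
      (hf.continuous.tendsto xstar).comp hxstar
    have h2 : (fun n => f (Z n)) = fun n => g (T n) := funext fun n => (hGoodn n).2.2.1
    rw [h2] at h1
    exact tendsto_nhds_unique h1 ((hgcont.tendsto tstar).comp hTconv)
  have hZmem : ∀ n, ‖Z n - x₀‖ ∈ Set.Icc (0:ℝ) r := by
    intro n
    exact ⟨norm_nonneg _, le_trans (good_rad _ _ (hGoodn n)).1.le hρbr⟩
  have hnormconv : Tendsto (fun n => ‖Z n - x₀‖) atTop (𝓝 ‖xstar - x₀‖) :=
    (hxstar.sub tendsto_const_nhds).norm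
  have hxstarmem : ‖xstar - x₀‖ ∈ Set.Icc (0:ℝ) r :=
    ⟨norm_nonneg _, le_of_tendsto hnormconv (Eventually.of_forall fun n => (hZmem n).2)⟩
  have hφconv : Tendsto (fun n => φ ‖Z n - x₀‖) atTop (𝓝 (φ ‖xstar - x₀‖)) := by
    have h1 : Tendsto (fun n => ‖Z n - x₀‖) atTop (𝓝[Set.Icc (0:ℝ) r] ‖xstar - x₀‖) :=
      tendsto_nhdsWithin_of_tendsto_nhds_of_eventually_within _ hnormconv
        (Eventually.of_forall hZmem)
    exact ((hφcont _ hxstarmem).tendsto).comp h1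
  have hGoodstar : Good tstar xstar := by
    refine ⟨htstar0, htstar1, hfxstar, ?_⟩
    have h1 : Tendsto (fun n => T n * K₁) atTop (𝓝 (tstar * K₁)) := hTconv.mul_const K₁
    exact le_of_tendsto_of_tendsto' hφconv h1 fun n => (hGoodn n).2.2.2
  by_cases hts : tstar < 1
  · exfalso
    obtain ⟨t', x', htt', hG', hnorm'⟩ := hstep tstar xstar hGoodstar hts
    have hmemS : ∀ n, t' ∈ S (T n) (Z n) := by
      intro n
      refine ⟨x', hG', ?_⟩
      calc ‖x' - Z n‖ ≤ ‖x' - xstar‖ + ‖xstar - Z n‖ :=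
            norm_sub_le_norm_sub_add_norm_sub _ _ _
        _ ≤ (t' - tstar) * C + (tstar - T n) * C := add_le_add hnorm' (hxZn n)
        _ = (t' - T n) * C := by ring
    have h5 : ∀ n, t' - (1/2 : ℝ)^n < T (n+1) := by
      intro n
      have h6 := le_csSup (hSbdd (T n) (Z n)) (hmemS n)
      linarith [hsupb n]
    obtain ⟨n, hn⟩ := exists_pow_lt_of_lt_one
      (show (0:ℝ) < t' - tstar by linarith) (by norm_num : (1/2 : ℝ) < 1)
    have h7 := h5 n
    have h8 := hTle (n+1)
    linarith
  · push_neg at hts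
    have htseq : tstar = 1 := le_antisymm htstar1 hts
    refine ⟨xstar, ?_, ?_⟩
    · rw [Metric.mem_ball, dist_eq_norm]
      exact lt_of_lt_of_le (good_rad _ _ hGoodstar).1 hρbr
    · rw [hfxstar, htseq, hg1]
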